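/- Consider a direct-mapped (r = 0) 32 KB VIVT cache with 64-byte lines and page size 4 KB. Suppose the cache is homonym-free: there is a partial function φ from resident virtual addresses to physical addresses with V mod 2^12 = φ(V) mod 2^12 for all resident V. Then for any physical address P, the set of resident virtual line addresses V with φ(V) aligned to the same line as P (φ(V)/2^6 = P/2^6) has cardinality at most 8, and each such V is determined uniquely by (V / 2^12) mod 8 together with P. -/

import Mathlib

/-- Homonym-free direct-mapped 32 KB VIVT cache with 64-byte lines and 4 KB
pages: `R` is the set of resident virtual line addresses (injective line
index), `φ` maps residents to physical addresses preserving intra-page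
offsets.  For any physical address `P`, the set of residents whose image is
aligned to the same line as `P` has at most 8 elements, and each such `V`
is uniquely determined by `(V / 2^12) % 8` together with `P`. -/
theorem stmt7 (R : Finset ℕ) (φ : ℕ → ℕ)
    (hbound : ∀ V ∈ R, V < 2^32)
    (hline : ∀ V ∈ R, V % 2^6 = 0)
    (hinj : Set.InjOn (fun V => (V / 2^6) % 2^9) R)
    (hφ : ∀ V ∈ R, V % 2^12 = φ V % 2^12)
    (P : ℕ) :
    (R.filter (fun V => φ V / 2^6 = P / 2^6)).card ≤ 8 ∧
      Set.InjOn (fun V => (V / 2^12) % 8)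
        (R.filter (fun V => φ V / 2^6 = P / 2^6)) := by
  -- key: every V in the filter has V % 2^12 fixed
  have key : ∀ V ∈ R.filter (fun V => φ V / 2^6 = P / 2^6),
      V % 2^12 = ((P / 2^6) * 2^6) % 2^12 := by
    intro V hV
    rw [Finset.mem_filter] at hV
    obtain ⟨hVR, hVP⟩ := hV
    have h1 := hφ V hVR
    have h2 := hline V hVR
    have h3 : φ V % 2^6 = V % 2^6 := by omega
    have h4 : φ V = (P / 2^6) * 2^6 := by omega
    omega
  have hinj' : Set.InjOn (fun V => (V / 2^12) % 8)
      (R.filter (fun V => φ V / 2^6 = P / 2^6)) := by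
    intro V1 h1 V2 h2 heq
    simp only at heq
    have k1 := key V1 h1
    have k2 := key V2 h2
    rw [Finset.coe_filter, Set.mem_setOf_eq] at h1 h2
    apply hinj h1.1 h2.1
    simp only
    omega
  exact ⟨by
    calc (R.filter (fun V => φ V / 2^6 = P / 2^6)).card
        ≤ (Finset.range 8).card := by
          apply Finset.card_le_card_of_injOn (fun V => (V / 2^12) % 8)
          · intro V _; simp only [Finset.mem_coe, Finset.mem_range]; omega
          · exact hinj'
      _ = 8 := Finset.card_range 8, hinj'⟩
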